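/- arXiv:1705.06999 — 6 statements merged into one kernel-verified Lean document; each statement's English description precedes it below -/
import Mathlib

section
/- Let u, v : Ω → ℝ be smooth, let α ∈ ℝ with α ≠ 0, and suppose u₁ and v₁ vanish nowhere on Ω. If α·u₂·v₁ = u₁·v₂ and u₄·v₁ = u₁·v₃ hold identically on Ω, then u satisfies the second-order equation ∂₃(u₂/u₁) − ∂₄(u₂/u₁) = (α⁻¹ − 1)·∂₂(u₄/u₁) on Ω, and v satisfies the second-order equation ∂₄(v₂/v₁) − ∂₃(v₂/v₁) = (α − 1)·∂₂(v₃/v₁) on Ω. -/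
/-- Partial derivative of `F : ℝ⁴ → ℝ` in the `i`-th coordinate direction. -/
noncomputable def pd (i : Fin 4) (F : (Fin 4 → ℝ) → ℝ) : (Fin 4 → ℝ) → ℝ :=
  fun x => fderiv ℝ F x (Pi.single i 1)

section Helpers

variable {F G : (Fin 4 → ℝ) → ℝ} {x : Fin 4 → ℝ}

lemma pd_contDiffAt (i : Fin 4) (hF : ContDiffAt ℝ (⊤ : ℕ∞) F x) :
    ContDiffAt ℝ (⊤ : ℕ∞) (pd i F) x := by
  have h := hF.fderiv_right (m := (⊤ : ℕ∞)) (by simp)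
  exact h.clm_apply contDiffAt_const

lemma pd_differentiableAt (i : Fin 4) (hF : ContDiffAt ℝ (⊤ : ℕ∞) F x) :
    DifferentiableAt ℝ (pd i F) x :=
  (pd_contDiffAt i hF).differentiableAt (by simp)

lemma pd_mul (i : Fin 4) (hF : DifferentiableAt ℝ F x) (hG : DifferentiableAt ℝ G x) :
    pd i (fun y => F y * G y) x = F x * pd i G x + G x * pd i F x := by
  unfold pd
  rw [fderiv_fun_mul hF hG]
  simp

lemma pd_const_mul (i : Fin 4) (hF : DifferentiableAt ℝ F x) (a : ℝ) :
    pd i (fun y => a * F y) x = a * pd i F x := by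
  unfold pd
  rw [fderiv_const_mul hF a]
  simp

lemma pd_mul3 (i : Fin 4) (a : ℝ) (hF : DifferentiableAt ℝ F x)
    (hG : DifferentiableAt ℝ G x) :
    pd i (fun y => a * F y * G y) x
      = a * pd i F x * G x + a * F x * pd i G x := by
  have h1 : pd i (fun y => a * F y * G y) x
      = (a * F x) * pd i G x + G x * pd i (fun y => a * F y) x :=
    pd_mul i (hF.const_mul a) hG
  rw [pd_const_mul i hF a] at h1
  rw [h1]; ring

lemma pd_div (i : Fin 4) (hF : DifferentiableAt ℝ F x) (hG : DifferentiableAt ℝ G x)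
    (hGx : G x ≠ 0) :
    pd i (fun y => F y / G y) x
      = (pd i F x * G x - F x * pd i G x) / (G x) ^ 2 := by
  have h1 : HasFDerivAt (fun y => (G y)⁻¹) ((-(G x ^ 2)⁻¹) • fderiv ℝ G x) x :=
    (hasDerivAt_inv hGx).comp_hasFDerivAt x hG.hasFDerivAt
  have h2 : HasFDerivAt (fun y => F y * (G y)⁻¹)
      (F x • ((-(G x ^ 2)⁻¹) • fderiv ℝ G x) + (G x)⁻¹ • fderiv ℝ F x) x :=
    hF.hasFDerivAt.mul h1
  have h3 : pd i (fun y => F y / G y) x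
      = (F x • ((-(G x ^ 2)⁻¹) • fderiv ℝ G x) + (G x)⁻¹ • fderiv ℝ F x) (Pi.single i 1) := by
    unfold pd
    simp only [div_eq_mul_inv]
    rw [h2.fderiv]
  rw [h3]
  simp only [ContinuousLinearMap.add_apply, ContinuousLinearMap.smul_apply, smul_eq_mul]
  show F x * (-(G x ^ 2)⁻¹ * pd i G x) + (G x)⁻¹ * pd i F x = _
  field_simp
  ring

lemma pd_comm (i j : Fin 4) (hF : ContDiffAt ℝ (⊤ : ℕ∞) F x) :
    pd i (pd j F) x = pd j (pd i F) x := by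
  have hd : DifferentiableAt ℝ (fderiv ℝ F) x :=
    (hF.fderiv_right (m := (⊤ : ℕ∞)) (by simp)).differentiableAt (by simp)
  have hs : IsSymmSndFDerivAt ℝ F x :=
    hF.isSymmSndFDerivAt (by rw [minSmoothness_of_isRCLikeNormedField]; exact_mod_cast ENat.natCast_le_of_coe_top_le_withTop le_rfl 2)
  have key : ∀ a b : Fin 4, pd a (pd b F) x
      = fderiv ℝ (fderiv ℝ F) x (Pi.single a 1) (Pi.single b 1) := by
    intro a b
    show fderiv ℝ (fun y => fderiv ℝ F y (Pi.single b 1)) x (Pi.single a 1) = _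
    rw [fderiv_clm_apply hd (differentiableAt_const _)]
    simp
  rw [key, key, hs.eq]

lemma key_u (α u0 u1 u3 v0 v1 v2 u00 u01 u02 u03 u12 u13 v00 v01 v02 v03 v12 v13 : ℝ)
    (hα : α ≠ 0) (h0 : u0 ≠ 0) (hv0 : v0 ≠ 0)
    (h10 : α * u01 * v0 + α * u1 * v00 = u00 * v1 + u0 * v01)
    (h12 : α * u12 * v0 + α * u1 * v02 = u02 * v1 + u0 * v12)
    (h13 : α * u13 * v0 + α * u1 * v03 = u03 * v1 + u0 * v13)
    (h20 : u03 * v0 + u3 * v00 = u00 * v2 + u0 * v02)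
    (h21 : u13 * v0 + u3 * v01 = u01 * v2 + u0 * v12)
    (ho1 : α * u1 * v0 = u0 * v1) (ho2 : u3 * v0 = u0 * v2) :
    (u12 * u0 - u1 * u02) / u0 ^ 2 - (u13 * u0 - u1 * u03) / u0 ^ 2
      = (α⁻¹ - 1) * ((u13 * u0 - u3 * u01) / u0 ^ 2) := by
  have key : v0 * u0 * (α * (u0 * u12 - u0 * u13 - u1 * u02 + u1 * u03))
      = v0 * u0 * ((1 - α) * (u0 * u13 - u3 * u01)) := by
    linear_combination u0^2 * h12 - u0^2 * h21 + α*u0*u1 * h20 - u0*u3 * h10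
      + (u3*u00 - u0*u02) * ho1 + (u0*u01 - α*u1*u00) * ho2
  have key2 : α * (u0 * u12 - u0 * u13 - u1 * u02 + u1 * u03)
      = (1 - α) * (u0 * u13 - u3 * u01) :=
    mul_left_cancel₀ (mul_ne_zero hv0 h0) key
  have hc : α⁻¹ * α = 1 := inv_mul_cancel₀ hα
  rw [div_sub_div_same, ← mul_div_assoc]
  congr 1
  linear_combination α⁻¹ * key2
    - (u0*u12 - u1*u02 + u1*u03 - u3*u01) * hc

lemma key_v (α u0 u1 u3 v0 v1 v2 u00 u01 u02 u03 u12 u13 v00 v01 v02 v03 v12 v13 : ℝ)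
    (hα : α ≠ 0) (h0 : u0 ≠ 0) (hv0 : v0 ≠ 0)
    (h10 : α * u01 * v0 + α * u1 * v00 = u00 * v1 + u0 * v01)
    (h13 : α * u13 * v0 + α * u1 * v03 = u03 * v1 + u0 * v13)
    (h20 : u03 * v0 + u3 * v00 = u00 * v2 + u0 * v02)
    (h21 : u13 * v0 + u3 * v01 = u01 * v2 + u0 * v12)
    (ho1 : α * u1 * v0 = u0 * v1) (ho2 : u3 * v0 = u0 * v2) :
    (v13 * v0 - v1 * v03) / v0 ^ 2 - (v12 * v0 - v1 * v02) / v0 ^ 2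
      = (α - 1) * ((v12 * v0 - v2 * v01) / v0 ^ 2) := by
  have key : u0 ^ 2 * (v0 * v13 - v0 * v12 - v1 * v03 + v1 * v02)
      = u0 ^ 2 * ((α - 1) * (v0 * v12 - v2 * v01)) := by
    linear_combination (-(u0*v0)) * h13 + α*u0*v0 * h21 - u0*v1 * h20
      + (α*u3*v0 - (α-1)*u0*v2) * h10 + (u0*v03 - u3*v00) * ho1
      + (-(α^2*u01*v0) - α*(α-1)*u1*v00 + α*u00*v1) * ho2
  have key2 : v0 * v13 - v0 * v12 - v1 * v03 + v1 * v02
      = (α - 1) * (v0 * v12 - v2 * v01) :=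
    mul_left_cancel₀ (pow_ne_zero 2 h0) key
  rw [div_sub_div_same, ← mul_div_assoc]
  congr 1
  linear_combination key2

end Helpers

/-- Elimination of `v` (resp. `u`) from the linearly degenerate system
`α u₂ v₁ = u₁ v₂`, `u₄ v₁ = u₁ v₃` yields second-order equations for `u` and `v`
(4D Bäcklund transformation).  Coordinates `x¹,…,x⁴` are indexed by `0,…,3`. -/
theorem statement0 (Ω : Set (Fin 4 → ℝ)) (hΩ : IsOpen Ω)
    (u v : (Fin 4 → ℝ) → ℝ)
    (hu : ContDiffOn ℝ (⊤ : ℕ∞) u Ω) (hv : ContDiffOn ℝ (⊤ : ℕ∞) v Ω)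
    (α : ℝ) (hα : α ≠ 0)
    (hu1 : ∀ x ∈ Ω, pd 0 u x ≠ 0) (hv1 : ∀ x ∈ Ω, pd 0 v x ≠ 0)
    (heq1 : ∀ x ∈ Ω, α * pd 1 u x * pd 0 v x = pd 0 u x * pd 1 v x)
    (heq2 : ∀ x ∈ Ω, pd 3 u x * pd 0 v x = pd 0 u x * pd 2 v x) :
    (∀ x ∈ Ω,
      pd 2 (fun y => pd 1 u y / pd 0 u y) x - pd 3 (fun y => pd 1 u y / pd 0 u y) x
        = (α⁻¹ - 1) * pd 1 (fun y => pd 3 u y / pd 0 u y) x) ∧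
    (∀ x ∈ Ω,
      pd 3 (fun y => pd 1 v y / pd 0 v y) x - pd 2 (fun y => pd 1 v y / pd 0 v y) x
        = (α - 1) * pd 1 (fun y => pd 2 v y / pd 0 v y) x) := by
  have main : ∀ x ∈ Ω,
      ((pd 2 (fun y => pd 1 u y / pd 0 u y) x - pd 3 (fun y => pd 1 u y / pd 0 u y) x
          = (α⁻¹ - 1) * pd 1 (fun y => pd 3 u y / pd 0 u y) x) ∧
        (pd 3 (fun y => pd 1 v y / pd 0 v y) x - pd 2 (fun y => pd 1 v y / pd 0 v y) x
          = (α - 1) * pd 1 (fun y => pd 2 v y / pd 0 v y) x)) := by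
    intro x hx
    have hmem : Ω ∈ nhds x := hΩ.mem_nhds hx
    have hux : ContDiffAt ℝ (⊤ : ℕ∞) u x := hu.contDiffAt hmem
    have hvx : ContDiffAt ℝ (⊤ : ℕ∞) v x := hv.contDiffAt hmem
    have du : ∀ i : Fin 4, DifferentiableAt ℝ (pd i u) x := fun i => pd_differentiableAt i hux
    have dv : ∀ i : Fin 4, DifferentiableAt ℝ (pd i v) x := fun i => pd_differentiableAt i hvx
    -- derivatives of the first-order equations
    have h1ev : (fun y => α * pd 1 u y * pd 0 v y) =ᶠ[nhds x]
        (fun y => pd 0 u y * pd 1 v y) :=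
      Filter.eventuallyEq_of_mem hmem fun y hy => heq1 y hy
    have h2ev : (fun y => pd 3 u y * pd 0 v y) =ᶠ[nhds x]
        (fun y => pd 0 u y * pd 2 v y) :=
      Filter.eventuallyEq_of_mem hmem fun y hy => heq2 y hy
    have E1 : ∀ j : Fin 4,
        α * pd j (pd 1 u) x * pd 0 v x + α * pd 1 u x * pd j (pd 0 v) x
          = pd j (pd 0 u) x * pd 1 v x + pd 0 u x * pd j (pd 1 v) x := by
      intro j
      have h : pd j (fun y => α * pd 1 u y * pd 0 v y) x
          = pd j (fun y => pd 0 u y * pd 1 v y) x :=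
        DFunLike.congr_fun (h1ev.fderiv_eq (𝕜 := ℝ)) (Pi.single j 1)
      rw [pd_mul3 j α (du 1) (dv 0), pd_mul j (du 0) (dv 1)] at h
      linear_combination h
    have E2 : ∀ j : Fin 4,
        pd j (pd 3 u) x * pd 0 v x + pd 3 u x * pd j (pd 0 v) x
          = pd j (pd 0 u) x * pd 2 v x + pd 0 u x * pd j (pd 2 v) x := by
      intro j
      have h : pd j (fun y => pd 3 u y * pd 0 v y) x
          = pd j (fun y => pd 0 u y * pd 2 v y) x :=
        DFunLike.congr_fun (h2ev.fderiv_eq (𝕜 := ℝ)) (Pi.single j 1)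
      rw [pd_mul j (du 3) (dv 0), pd_mul j (du 0) (dv 2)] at h
      linear_combination h
    -- canonicalize the five needed instances
    have h10 := E1 0
    rw [pd_comm 0 1 hux, pd_comm 0 1 hvx] at h10
    have h12 := E1 2
    have h13 := E1 3
    have h20 := E2 0
    rw [pd_comm 0 3 hux, pd_comm 0 2 hvx] at h20
    have h21 := E2 1
    rw [pd_comm 1 3 hux, pd_comm 1 2 hvx] at h21
    have ho1 := heq1 x hx
    have ho2 := heq2 x hx
    have hu0 := hu1 x hx
    have hv0 := hv1 x hx
    constructor
    · rw [pd_div 2 (du 1) (du 0) hu0, pd_div 3 (du 1) (du 0) hu0,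
        pd_div 1 (du 3) (du 0) hu0, pd_comm 1 3 hux]
      exact key_u α (pd 0 u x) (pd 1 u x) (pd 3 u x) (pd 0 v x) (pd 1 v x) (pd 2 v x)
        (pd 0 (pd 0 u) x) (pd 1 (pd 0 u) x) (pd 2 (pd 0 u) x) (pd 3 (pd 0 u) x)
        (pd 2 (pd 1 u) x) (pd 3 (pd 1 u) x)
        (pd 0 (pd 0 v) x) (pd 1 (pd 0 v) x) (pd 2 (pd 0 v) x) (pd 3 (pd 0 v) x)
        (pd 2 (pd 1 v) x) (pd 3 (pd 1 v) x)
        hα hu0 hv0 h10 h12 h13 h20 h21 ho1 ho2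
    · rw [pd_div 3 (dv 1) (dv 0) hv0, pd_div 2 (dv 1) (dv 0) hv0,
        pd_div 1 (dv 2) (dv 0) hv0, pd_comm 1 2 hvx]
      exact key_v α (pd 0 u x) (pd 1 u x) (pd 3 u x) (pd 0 v x) (pd 1 v x) (pd 2 v x)
        (pd 0 (pd 0 u) x) (pd 1 (pd 0 u) x) (pd 2 (pd 0 u) x) (pd 3 (pd 0 u) x)
        (pd 2 (pd 1 u) x) (pd 3 (pd 1 u) x)
        (pd 0 (pd 0 v) x) (pd 1 (pd 0 v) x) (pd 2 (pd 0 v) x) (pd 3 (pd 0 v) x)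
        (pd 2 (pd 1 v) x) (pd 3 (pd 1 v) x)
        hα hu0 hv0 h10 h13 h20 h21 ho1 ho2
  exact ⟨fun x hx => (main x hx).1, fun x hx => (main x hx).2⟩
end

section
/- Let v : Ω → ℝ be smooth. Then v satisfies v₂₄ − v₁₃ + v₄·v₁₁ − v₁·v₁₄ = 0 identically on Ω if and only if for every λ ∈ ℝ the vector fields X = ∂₂ − (v₁ + λ)·∂₁ and Y = ∂₃ − v₄·∂₁ − λ·∂₄ on Ω commute: [X, Y] = 0. -/
/-- Lie bracket of two vector fields on ℝ⁴, given by their component functions: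
`[X, Y]ⁱ = Σⱼ (Xʲ ∂ⱼYⁱ − Yʲ ∂ⱼXⁱ)`. -/
noncomputable def lieB (X Y : (Fin 4 → ℝ) → (Fin 4 → ℝ)) : (Fin 4 → ℝ) → (Fin 4 → ℝ) :=
  fun x i => ∑ j : Fin 4, (X x j * pd j (fun y => Y y i) x - Y x j * pd j (fun y => X y i) x)

section helpers

variable {v : (Fin 4 → ℝ) → ℝ} {x : Fin 4 → ℝ}

lemma pd_const (j : Fin 4) (c : ℝ) : pd j (fun _ => c) x = 0 := by
  simp [pd]

lemma pd_neg (j : Fin 4) (f : (Fin 4 → ℝ) → ℝ) :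
    pd j (fun y => -f y) x = -pd j f x := by
  simp [pd, fderiv_neg]

lemma pd_neg_add_const (j : Fin 4) (f : (Fin 4 → ℝ) → ℝ) (c : ℝ) :
    pd j (fun y => -(f y + c)) x = -pd j f x := by
  simp only [pd, fderiv_neg, fderiv_add_const]
  simp

lemma pd_const_sub (j : Fin 4) (f : (Fin 4 → ℝ) → ℝ) (c : ℝ) :
    pd j (fun y => c - f y) x = -pd j f x := by
  simp [pd, fderiv_const_sub]

lemma pd_const_add_neg (j : Fin 4) (f : (Fin 4 → ℝ) → ℝ) (c : ℝ) :
    pd j (fun y => c + -f y) x = -pd j f x := by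
  have : (fun y => c + -f y) = fun y => c - f y := by funext y; ring
  rw [this, pd_const_sub]

lemma pd_pd_eq (hv : ContDiffAt ℝ ((⊤:ℕ∞):WithTop ℕ∞) v x) (i j : Fin 4) :
    pd i (pd j v) x = fderiv ℝ (fderiv ℝ v) x (Pi.single i 1) (Pi.single j 1) := by
  have h : ContDiffAt ℝ ((⊤:ℕ∞):WithTop ℕ∞) (fderiv ℝ v) x :=
    hv.fderiv_right (by simp)
  show fderiv ℝ (fun y => fderiv ℝ v y (Pi.single j 1)) x (Pi.single i 1) = _
  rw [fderiv_clm_apply (h.differentiableAt (by simp)) (differentiableAt_const _)]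
  simp

lemma pd_symm (hv : ContDiffAt ℝ ((⊤:ℕ∞):WithTop ℕ∞) v x) (i j : Fin 4) :
    pd i (pd j v) x = pd j (pd i v) x := by
  rw [pd_pd_eq hv, pd_pd_eq hv]
  exact (hv.isSymmSndFDerivAt (by rw [minSmoothness_of_isRCLikeNormedField]; exact (WithTop.coe_le_coe.mpr le_top : ((2:ℕ∞):WithTop ℕ∞) ≤ _))).eq _ _

lemma key (hvx : ContDiffAt ℝ ((⊤:ℕ∞):WithTop ℕ∞) v x) (lam : ℝ) :
    lieB (fun y => ![-(pd 0 v y + lam), 1, 0, 0])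
         (fun y => ![-(pd 3 v y), 0, 1, -lam]) x
      = ![-(pd 3 (pd 1 v) x - pd 2 (pd 0 v) x
            + pd 3 v x * pd 0 (pd 0 v) x - pd 0 v x * pd 3 (pd 0 v) x), 0, 0, 0] := by
  funext i
  fin_cases i <;>
    simp [lieB, Fin.sum_univ_four, pd_const, pd_neg, pd_neg_add_const, pd_const_sub, pd_const_add_neg]
  rw [pd_symm hvx 0 3, pd_symm hvx 1 3]
  ring

end helpers

/-- `v` satisfies `v₂₄ − v₁₃ + v₄v₁₁ − v₁v₁₄ = 0` on `Ω` iff for every `λ` the vector fields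
`X = ∂₂ − (v₁ + λ)∂₁` and `Y = ∂₃ − v₄∂₁ − λ∂₄` commute on `Ω`
(dispersionless Lax pair of the Segre type [4] system).
Coordinates `x¹,…,x⁴` are indexed by `0,…,3`. -/
theorem statement8 (Ω : Set (Fin 4 → ℝ)) (hΩ : IsOpen Ω)
    (v : (Fin 4 → ℝ) → ℝ) (hv : ContDiffOn ℝ (⊤ : ℕ∞) v Ω) :
    (∀ x ∈ Ω,
        pd 3 (pd 1 v) x - pd 2 (pd 0 v) x
          + pd 3 v x * pd 0 (pd 0 v) x - pd 0 v x * pd 3 (pd 0 v) x = 0) ↔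
    (∀ lam : ℝ, ∀ x ∈ Ω,
        lieB (fun y => ![-(pd 0 v y + lam), 1, 0, 0])
             (fun y => ![-(pd 3 v y), 0, 1, -lam]) x = 0) := by
  constructor
  · intro h lam x hx
    have hvx : ContDiffAt ℝ ((⊤:ℕ∞):WithTop ℕ∞) v x := hv.contDiffAt (hΩ.mem_nhds hx)
    rw [key hvx lam, h x hx]
    funext i
    fin_cases i <;> simp
  · intro h x hx
    have hvx : ContDiffAt ℝ ((⊤:ℕ∞):WithTop ℕ∞) v x := hv.contDiffAt (hΩ.mem_nhds hx)
    have h0 := h 0 x hx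
    rw [key hvx 0] at h0
    have h1 := congrFun h0 0
    simp only [Matrix.cons_val_zero, Pi.zero_apply, neg_eq_zero] at h1
    exact h1
end

section
/- Let u, v : Ω → ℝ be smooth, let α ∈ ℝ, and suppose v₁ vanishes nowhere on Ω. If u₃·v₁ − u₁·v₃ = (v₂ − α·v₃)·v₁ and u₄·v₁ − u₁·v₄ = (v₃ − α·v₄)·v₁ hold identically on Ω, then ∂₂(v₄/v₁) − α·∂₃(v₄/v₁) = ∂₃(v₃/v₁) − α·∂₄(v₃/v₁) on Ω. -/
section aux

variable {x : Fin 4 → ℝ}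

lemma aux_fderiv_diff {F : (Fin 4 → ℝ) → ℝ} (hF : ContDiffAt ℝ (⊤ : ℕ∞) F x) :
    DifferentiableAt ℝ (fderiv ℝ F) x := by
  have h := hF.fderiv_right (m := 1) (by norm_cast)
  exact h.differentiableAt (by norm_num)

lemma aux_pd_diff {F : (Fin 4 → ℝ) → ℝ} (hF : ContDiffAt ℝ (⊤ : ℕ∞) F x) (j : Fin 4) :
    DifferentiableAt ℝ (pd j F) x := by
  show DifferentiableAt ℝ (fun y => fderiv ℝ F y (Pi.single j 1)) x
  exact (aux_fderiv_diff hF).clm_apply (differentiableAt_const _)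

lemma aux_pd_pd_eq {F : (Fin 4 → ℝ) → ℝ} (hF : ContDiffAt ℝ (⊤ : ℕ∞) F x) (i j : Fin 4) :
    pd i (pd j F) x = fderiv ℝ (fderiv ℝ F) x (Pi.single i 1) (Pi.single j 1) := by
  show fderiv ℝ (fun y => fderiv ℝ F y (Pi.single j 1)) x (Pi.single i 1) = _
  rw [fderiv_clm_apply (aux_fderiv_diff hF) (differentiableAt_const _)]
  simp

lemma aux_pd_symm {F : (Fin 4 → ℝ) → ℝ} (hF : ContDiffAt ℝ (⊤ : ℕ∞) F x) (i j : Fin 4) :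
    pd i (pd j F) x = pd j (pd i F) x := by
  rw [aux_pd_pd_eq hF, aux_pd_pd_eq hF]
  exact hF.isSymmSndFDerivAt (by rw [minSmoothness_of_isRCLikeNormedField]; norm_cast) _ _

lemma aux_pd_mul {f g : (Fin 4 → ℝ) → ℝ} (hf : DifferentiableAt ℝ f x)
    (hg : DifferentiableAt ℝ g x) (i : Fin 4) :
    pd i (fun y => f y * g y) x = pd i f x * g x + f x * pd i g x := by
  simp only [pd, fderiv_fun_mul hf hg, ContinuousLinearMap.add_apply,
    ContinuousLinearMap.smul_apply, smul_eq_mul]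
  ring

lemma aux_pd_sub {f g : (Fin 4 → ℝ) → ℝ} (hf : DifferentiableAt ℝ f x)
    (hg : DifferentiableAt ℝ g x) (i : Fin 4) :
    pd i (fun y => f y - g y) x = pd i f x - pd i g x := by
  simp only [pd, fderiv_fun_sub hf hg, ContinuousLinearMap.sub_apply]

lemma aux_pd_const_mul {f : (Fin 4 → ℝ) → ℝ} (hf : DifferentiableAt ℝ f x)
    (c : ℝ) (i : Fin 4) :
    pd i (fun y => c * f y) x = c * pd i f x := by
  simp only [pd, fderiv_const_mul hf c, ContinuousLinearMap.smul_apply, smul_eq_mul]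

lemma aux_pd_inv {g : (Fin 4 → ℝ) → ℝ} (hg : DifferentiableAt ℝ g x)
    (h0 : g x ≠ 0) (i : Fin 4) :
    pd i (fun y => (g y)⁻¹) x = -(pd i g x / (g x) ^ 2) := by
  have hcomp : pd i (fun y => (g y)⁻¹) x
      = (fderiv ℝ (fun t : ℝ => t⁻¹) (g x)).comp (fderiv ℝ g x) (Pi.single i 1) := by
    show fderiv ℝ ((fun t : ℝ => t⁻¹) ∘ g) x (Pi.single i 1) = _
    rw [fderiv_comp x (differentiableAt_inv h0) hg]
  rw [hcomp, fderiv_inv]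
  simp [pd]
  ring

lemma aux_pd_div {f g : (Fin 4 → ℝ) → ℝ} (hf : DifferentiableAt ℝ f x)
    (hg : DifferentiableAt ℝ g x) (h0 : g x ≠ 0) (i : Fin 4) :
    pd i (fun y => f y / g y) x
      = (pd i f x * g x - f x * pd i g x) / (g x) ^ 2 := by
  have : (fun y => f y / g y) = fun y => f y * (g y)⁻¹ := by
    funext y; rw [div_eq_mul_inv]
  rw [this, aux_pd_mul (g := fun y => (g y)⁻¹) hf (hg.inv h0), aux_pd_inv hg h0]
  field_simp
  ring

lemma aux_pd_congr {Ω : Set (Fin 4 → ℝ)} (hΩ : IsOpen Ω) (hx : x ∈ Ω)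
    {f g : (Fin 4 → ℝ) → ℝ} (h : ∀ y ∈ Ω, f y = g y) (i : Fin 4) :
    pd i f x = pd i g x := by
  have he : f =ᶠ[nhds x] g := Filter.eventuallyEq_of_mem (hΩ.mem_nhds hx) h
  simp only [pd, he.fderiv_eq]

end aux

/-- Elimination of `u` from the Segre type [21] system `u₃v₁ − u₁v₃ = (v₂ − αv₃)v₁`,
`u₄v₁ − u₁v₄ = (v₃ − αv₄)v₁` yields `(∂₂ − α∂₃)(v₄/v₁) = (∂₃ − α∂₄)(v₃/v₁)`.
Coordinates `x¹,…,x⁴` are indexed by `0,…,3`. -/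
theorem statement10 (Ω : Set (Fin 4 → ℝ)) (hΩ : IsOpen Ω)
    (u v : (Fin 4 → ℝ) → ℝ)
    (hu : ContDiffOn ℝ (⊤ : ℕ∞) u Ω) (hv : ContDiffOn ℝ (⊤ : ℕ∞) v Ω)
    (α : ℝ)
    (hv1 : ∀ x ∈ Ω, pd 0 v x ≠ 0)
    (heq1 : ∀ x ∈ Ω,
      pd 2 u x * pd 0 v x - pd 0 u x * pd 2 v x = (pd 1 v x - α * pd 2 v x) * pd 0 v x)
    (heq2 : ∀ x ∈ Ω,
      pd 3 u x * pd 0 v x - pd 0 u x * pd 3 v x = (pd 2 v x - α * pd 3 v x) * pd 0 v x) :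
    ∀ x ∈ Ω,
      pd 1 (fun y => pd 3 v y / pd 0 v y) x - α * pd 2 (fun y => pd 3 v y / pd 0 v y) x
        = pd 2 (fun y => pd 2 v y / pd 0 v y) x
          - α * pd 3 (fun y => pd 2 v y / pd 0 v y) x := by
  intro x hx
  have hmem : Ω ∈ nhds x := hΩ.mem_nhds hx
  have hvx : ContDiffAt ℝ (⊤ : ℕ∞) v x := hv.contDiffAt hmem
  have hux : ContDiffAt ℝ (⊤ : ℕ∞) u x := hu.contDiffAt hmem
  have hDv : ∀ j : Fin 4, DifferentiableAt ℝ (pd j v) x := aux_pd_diff hvx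
  have hDu : ∀ j : Fin 4, DifferentiableAt ℝ (pd j u) x := aux_pd_diff hux
  have h0 : pd 0 v x ≠ 0 := hv1 x hx
  -- expansion of derivatives of the two sides of the equations
  have expandL : ∀ j k i : Fin 4,
      pd i (fun y => pd j u y * pd 0 v y - pd 0 u y * pd k v y) x
        = pd i (pd j u) x * pd 0 v x + pd j u x * pd i (pd 0 v) x
          - (pd i (pd 0 u) x * pd k v x + pd 0 u x * pd i (pd k v) x) := by
    intro j k i
    rw [aux_pd_sub (f := fun y => pd j u y * pd 0 v y) (g := fun y => pd 0 u y * pd k v y) ((hDu j).mul (hDv 0)) ((hDu 0).mul (hDv k)),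
      aux_pd_mul (hDu j) (hDv 0), aux_pd_mul (hDu 0) (hDv k)]
  have expandR : ∀ a b i : Fin 4,
      pd i (fun y => (pd a v y - α * pd b v y) * pd 0 v y) x
        = (pd i (pd a v) x - α * pd i (pd b v) x) * pd 0 v x
          + (pd a v x - α * pd b v x) * pd i (pd 0 v) x := by
    intro a b i
    rw [aux_pd_mul (f := fun y => pd a v y - α * pd b v y) ((hDv a).sub ((differentiableAt_const α).mul (hDv b))) (hDv 0),
      aux_pd_sub (g := fun y => α * pd b v y) (hDv a) ((differentiableAt_const α).mul (hDv b)),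
      aux_pd_const_mul (hDv b)]
  have H1 : ∀ i : Fin 4,
      pd i (fun y => pd 2 u y * pd 0 v y - pd 0 u y * pd 2 v y) x
        = pd i (fun y => (pd 1 v y - α * pd 2 v y) * pd 0 v y) x :=
    fun i => aux_pd_congr hΩ hx heq1 i
  have H2 : ∀ i : Fin 4,
      pd i (fun y => pd 3 u y * pd 0 v y - pd 0 u y * pd 3 v y) x
        = pd i (fun y => (pd 2 v y - α * pd 3 v y) * pd 0 v y) x :=
    fun i => aux_pd_congr hΩ hx heq2 i
  have D3E1 := (expandL 2 2 3).symm.trans ((H1 3).trans (expandR 1 2 3))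
  have D0E1 := (expandL 2 2 0).symm.trans ((H1 0).trans (expandR 1 2 0))
  have D2E2 := (expandL 3 3 2).symm.trans ((H2 2).trans (expandR 2 3 2))
  have D0E2 := (expandL 3 3 0).symm.trans ((H2 0).trans (expandR 2 3 0))
  -- canonicalize second derivatives using symmetry
  rw [aux_pd_symm hux 3 2, aux_pd_symm hvx 3 0, aux_pd_symm hux 3 0,
    aux_pd_symm hvx 3 2, aux_pd_symm hvx 3 1] at D3E1
  rw [aux_pd_symm hvx 2 0, aux_pd_symm hux 2 0] at D2E2
  have hE1 := heq1 x hx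
  have hE2 := heq2 x hx
  have key : (pd 1 (pd 3 v) x * pd 0 v x - pd 3 v x * pd 0 (pd 1 v) x)
        - α * (pd 2 (pd 3 v) x * pd 0 v x - pd 3 v x * pd 0 (pd 2 v) x)
      = (pd 2 (pd 2 v) x * pd 0 v x - pd 2 v x * pd 0 (pd 2 v) x)
        - α * (pd 2 (pd 3 v) x * pd 0 v x - pd 2 v x * pd 0 (pd 3 v) x) := by
    apply mul_left_cancel₀ (pow_ne_zero 2 h0)
    linear_combination (-(pd 0 v x ^ 2)) * D3E1 + (pd 0 v x ^ 2) * D2E2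
      + (pd 0 v x * pd 3 v x) * D0E1 - (pd 0 v x * pd 2 v x) * D0E2
      + (pd 0 v x * pd 0 (pd 3 v) x - pd 3 v x * pd 0 (pd 0 v) x) * hE1
      - (pd 0 v x * pd 0 (pd 2 v) x - pd 2 v x * pd 0 (pd 0 v) x) * hE2
  rw [aux_pd_div (hDv 3) (hDv 0) h0 1, aux_pd_div (hDv 3) (hDv 0) h0 2,
    aux_pd_div (hDv 2) (hDv 0) h0 2, aux_pd_div (hDv 2) (hDv 0) h0 3]
  rw [aux_pd_symm hvx 1 0, aux_pd_symm hvx 2 0, aux_pd_symm hvx 3 0, aux_pd_symm hvx 3 2]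
  linear_combination key / (pd 0 v x) ^ 2
end

section
/- Let fₐ, f_b, f_c, f_p, f_q, f_r, hₐ, h_b, h_c, h_p, h_q, h_r be real numbers (standing for the partial derivatives of f and h with respect to u₁, u₂, u₃, v₁, v₂, v₃). Define the symmetric 4×4 matrix G by: G₄₄ = 1; G₁₄ = G₄₁ = −½(fₐ + h_p), G₂₄ = G₄₂ = −½(f_b + h_q), G₃₄ = G₄₃ = −½(f_c + h_r); and for i, j ∈ {1,2,3}, G_{ij} = ½(fᵤᵢ·h_{vⱼ} + fᵤⱼ·h_{vᵢ} − f_{vᵢ}·hᵤⱼ − f_{vⱼ}·hᵤᵢ), where (fᵤ₁, fᵤ₂, fᵤ₃) = (fₐ, f_b, f_c), (f_{v₁}, f_{v₂}, f_{v₃}) = (f_p, f_q, f_r), and similarly for h. Then det G = ( ¼·(fₐf_qh_c − fₐf_rh_b − f_bf_ph_c + f_bf_rhₐ + f_cf_ph_b − f_cf_qhₐ − f_ph_bh_r + f_ph_ch_q + f_qhₐh_r − f_qh_ch_p − f_rhₐh_q + f_rh_bh_p) )². -/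
lemma det_fin_four' (A : Matrix (Fin 4) (Fin 4) ℝ) : A.det =
    A 0 0 * (A 1 1 * (A 2 2 * A 3 3 - A 2 3 * A 3 2)
      - A 1 2 * (A 2 1 * A 3 3 - A 2 3 * A 3 1)
      + A 1 3 * (A 2 1 * A 3 2 - A 2 2 * A 3 1))
    - A 0 1 * (A 1 0 * (A 2 2 * A 3 3 - A 2 3 * A 3 2)
      - A 1 2 * (A 2 0 * A 3 3 - A 2 3 * A 3 0)
      + A 1 3 * (A 2 0 * A 3 2 - A 2 2 * A 3 0))
    + A 0 2 * (A 1 0 * (A 2 1 * A 3 3 - A 2 3 * A 3 1)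
      - A 1 1 * (A 2 0 * A 3 3 - A 2 3 * A 3 0)
      + A 1 3 * (A 2 0 * A 3 1 - A 2 1 * A 3 0))
    - A 0 3 * (A 1 0 * (A 2 1 * A 3 2 - A 2 2 * A 3 1)
      - A 1 1 * (A 2 0 * A 3 2 - A 2 2 * A 3 0)
      + A 1 2 * (A 2 0 * A 3 1 - A 2 1 * A 3 0)) := by
  rw [Matrix.det_succ_row_zero]
  simp only [Fin.sum_univ_four, Matrix.det_fin_three, Matrix.submatrix_apply]
  norm_num [Fin.succAbove, Fin.lt_def]
  simp only [show (Fin.succ 2 : Fin 4) = 3 from rfl,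
    show ((0 : Fin 3) : Fin 4) = 0 from rfl, show ((1 : Fin 3) : Fin 4) = 1 from rfl,
    show (Fin.castSucc 2 : Fin 4) = 2 from rfl]
  norm_num [show ((3 : Fin 4) : ℕ) = 3 from rfl]
  ring

/-- The determinant of the contravariant metric `G = (gⁱʲ)` attached to the characteristic
variety of the evolutionary system `u₄ = f(u₁,u₂,u₃,v₁,v₂,v₃)`, `v₄ = h(u₁,u₂,u₃,v₁,v₂,v₃)`
is a perfect square of a cubic polynomial in the twelve first-order derivatives of `f, h`. -/
theorem statement15 (fa fb fc fp fq fr ha hb hc hp hq hr : ℝ) :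
    (Matrix.det
      (Matrix.of fun i j : Fin 4 =>
        if hi : (i : ℕ) < 3 then
          if hj : (j : ℕ) < 3 then
            (![fa, fb, fc] ⟨i, hi⟩ * ![hp, hq, hr] ⟨j, hj⟩
              + ![fa, fb, fc] ⟨j, hj⟩ * ![hp, hq, hr] ⟨i, hi⟩
              - ![fp, fq, fr] ⟨i, hi⟩ * ![ha, hb, hc] ⟨j, hj⟩
              - ![fp, fq, fr] ⟨j, hj⟩ * ![ha, hb, hc] ⟨i, hi⟩) / 2
          else -(![fa, fb, fc] ⟨i, hi⟩ + ![hp, hq, hr] ⟨i, hi⟩) / 2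
        else
          if hj : (j : ℕ) < 3 then
            -(![fa, fb, fc] ⟨j, hj⟩ + ![hp, hq, hr] ⟨j, hj⟩) / 2
          else 1))
    = ((1 / 4) * (fa * fq * hc - fa * fr * hb - fb * fp * hc + fb * fr * ha
        + fc * fp * hb - fc * fq * ha - fp * hb * hr + fp * hc * hq
        + fq * ha * hr - fq * hc * hp - fr * ha * hq + fr * hb * hp)) ^ 2 := by
  have hM : (Matrix.of fun i j : Fin 4 =>
        if hi : (i : ℕ) < 3 then
          if hj : (j : ℕ) < 3 then
            (![fa, fb, fc] ⟨i, hi⟩ * ![hp, hq, hr] ⟨j, hj⟩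
              + ![fa, fb, fc] ⟨j, hj⟩ * ![hp, hq, hr] ⟨i, hi⟩
              - ![fp, fq, fr] ⟨i, hi⟩ * ![ha, hb, hc] ⟨j, hj⟩
              - ![fp, fq, fr] ⟨j, hj⟩ * ![ha, hb, hc] ⟨i, hi⟩) / 2
          else -(![fa, fb, fc] ⟨i, hi⟩ + ![hp, hq, hr] ⟨i, hi⟩) / 2
        else
          if hj : (j : ℕ) < 3 then
            -(![fa, fb, fc] ⟨j, hj⟩ + ![hp, hq, hr] ⟨j, hj⟩) / 2
          else 1) =
      !![(fa*hp+fa*hp-fp*ha-fp*ha)/2, (fa*hq+fb*hp-fp*hb-fq*ha)/2, (fa*hr+fc*hp-fp*hc-fr*ha)/2, -(fa+hp)/2;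
         (fb*hp+fa*hq-fq*ha-fp*hb)/2, (fb*hq+fb*hq-fq*hb-fq*hb)/2, (fb*hr+fc*hq-fq*hc-fr*hb)/2, -(fb+hq)/2;
         (fc*hp+fa*hr-fr*ha-fp*hc)/2, (fc*hq+fb*hr-fr*hb-fq*hc)/2, (fc*hr+fc*hr-fr*hc-fr*hc)/2, -(fc+hr)/2;
         -(fa+hp)/2, -(fb+hq)/2, -(fc+hr)/2, 1] := by
    ext i j
    fin_cases i <;> fin_cases j <;> rfl
  rw [hM, det_fin_four']
  norm_num [Matrix.cons_val_zero, Matrix.cons_val_one, Matrix.head_cons, Matrix.of_apply, Matrix.cons_val_two, Matrix.cons_val_three]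
  ring
end

section
/- Let α, β, γ, δ ∈ ℝ with γ ≠ δ, and let ξ¹, …, ξ⁷ ∈ ℝ with ξ⁶ ≠ 0 and ξ⁷ ≠ 0. Define u₁ = (δξ¹ − ξ²)/((δ−γ)ξ⁶), u₂ = (δξ² − ξ³)/((δ−γ)ξ⁶), u₃ = (δ−α)ξ⁴/((δ−γ)ξ⁶), u₄ = (δ−β)ξ⁵/((δ−γ)ξ⁶), and v₁ = (γξ¹ − ξ²)/((γ−δ)ξ⁷), v₂ = (γξ² − ξ³)/((γ−δ)ξ⁷), v₃ = (γ−α)ξ⁴/((γ−δ)ξ⁷), v₄ = (γ−β)ξ⁵/((γ−δ)ξ⁷). Then the two relations (δ−β)(γ−α)·u₃·v₄ = (δ−α)(γ−β)·u₄·v₃ and (γ−β)·u₄·(v₂ − δ·v₁) = (δ−β)·v₄·(u₂ − γ·u₁) hold. -/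
/-- Chasles construction with a 3×2 Kronecker block and a diagonal Jordan block
`diag(α,β,γ,δ)` of Segre type [1111]: the parametrised affine coordinates
`(u₁,…,u₄,v₁,…,v₄)` of the image of `ξ ∈ ℙ⁶` satisfy the two stated algebraic relations
defining the corresponding sixfold in `Gr(4,6)`. -/
theorem statement16 (α β γ δ : ℝ) (hγδ : γ ≠ δ)
    (ξ1 ξ2 ξ3 ξ4 ξ5 ξ6 ξ7 : ℝ) (hξ6 : ξ6 ≠ 0) (hξ7 : ξ7 ≠ 0)
    (u1 u2 u3 u4 v1 v2 v3 v4 : ℝ)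
    (hu1 : u1 = (δ * ξ1 - ξ2) / ((δ - γ) * ξ6))
    (hu2 : u2 = (δ * ξ2 - ξ3) / ((δ - γ) * ξ6))
    (hu3 : u3 = (δ - α) * ξ4 / ((δ - γ) * ξ6))
    (hu4 : u4 = (δ - β) * ξ5 / ((δ - γ) * ξ6))
    (hv1 : v1 = (γ * ξ1 - ξ2) / ((γ - δ) * ξ7))
    (hv2 : v2 = (γ * ξ2 - ξ3) / ((γ - δ) * ξ7))
    (hv3 : v3 = (γ - α) * ξ4 / ((γ - δ) * ξ7))
    (hv4 : v4 = (γ - β) * ξ5 / ((γ - δ) * ξ7)) :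
    (δ - β) * (γ - α) * u3 * v4 = (δ - α) * (γ - β) * u4 * v3 ∧
    (γ - β) * u4 * (v2 - δ * v1) = (δ - β) * v4 * (u2 - γ * u1) := by
  have h1 : δ - γ ≠ 0 := sub_ne_zero.mpr (Ne.symm hγδ)
  have h2 : γ - δ ≠ 0 := sub_ne_zero.mpr hγδ
  subst hu1 hu2 hu3 hu4 hv1 hv2 hv3 hv4
  constructor <;> field_simp <;> ring
end

section
/- On ℝ⁸ with coordinates (u₁, u₂, u₃, u₄, v₁, v₂, v₃, v₄), consider the 13 vector fields: ∂/∂u₁; ∂/∂u₄; ∂/∂v₂; ∂/∂v₃; ∂/∂u₂ + ∂/∂v₁; ∂/∂u₃ − ∂/∂v₄; u₁∂/∂u₁ + v₁∂/∂v₁ + u₂∂/∂u₂ + v₂∂/∂v₂; u₃∂/∂u₃ + v₃∂/∂v₃ + u₄∂/∂u₄ + v₄∂/∂v₄; u₁∂/∂u₄ + v₁∂/∂v₄ − u₂∂/∂u₃ − v₂∂/∂v₃; u₄∂/∂u₁ + v₄∂/∂v₁ − u₃∂/∂u₂ − v₃∂/∂v₂; u₁∂/∂u₂ + v₁∂/∂v₂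 − u₄∂/∂u₃ − v₄∂/∂v₃ + Σₖ uₖ∂/∂vₖ; u₂∂/∂u₁ + v₂∂/∂v₁ − u₃∂/∂u₄ − v₃∂/∂v₄ + Σₖ vₖ∂/∂uₖ; u₂∂/∂u₂ + v₂∂/∂v₂ + u₃∂/∂u₃ + v₃∂/∂v₃ + Σₖ vₖ∂/∂vₖ. Then each of these 13 vector fields Z, applied as a derivation to the functions F₁ = u₂ − v₁ and F₂ = u₃ + v₄, yields a function which is an ℝ-linear combination of F₁ and F₂; in particular Z(F₁) and Z(F₂) vanish on the common zero set {F₁ = 0, F₂ = 0}, so each Z is tangent to the sixfold defined by the linear system u₂ − v₁ = 0, u₃ + v₄ = 0. -/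
/-- Partial derivative of `F : ℝ⁸ → ℝ` in the `i`-th coordinate direction. -/
noncomputable def pd8 (i : Fin 8) (F : (Fin 8 → ℝ) → ℝ) : (Fin 8 → ℝ) → ℝ :=
  fun x => fderiv ℝ F x (Pi.single i 1)

/-- A vector field `Z` on ℝ⁸ (given by its components) applied as a derivation to a
function `F`: `Z(F) = Σᵢ Zⁱ ∂ᵢF`. -/
noncomputable def applyVF (Z : (Fin 8 → ℝ) → (Fin 8 → ℝ)) (F : (Fin 8 → ℝ) → ℝ) :
    (Fin 8 → ℝ) → ℝ :=
  fun x => ∑ i : Fin 8, Z x i * pd8 i F x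

@[simp] lemma vec8_0 (a0 a1 a2 a3 a4 a5 a6 a7 : ℝ) :
    (![a0,a1,a2,a3,a4,a5,a6,a7] : Fin 8 → ℝ) 0 = a0 := rfl
@[simp] lemma vec8_1 (a0 a1 a2 a3 a4 a5 a6 a7 : ℝ) :
    (![a0,a1,a2,a3,a4,a5,a6,a7] : Fin 8 → ℝ) 1 = a1 := rfl
@[simp] lemma vec8_2 (a0 a1 a2 a3 a4 a5 a6 a7 : ℝ) :
    (![a0,a1,a2,a3,a4,a5,a6,a7] : Fin 8 → ℝ) 2 = a2 := rfl
@[simp] lemma vec8_3 (a0 a1 a2 a3 a4 a5 a6 a7 : ℝ) :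
    (![a0,a1,a2,a3,a4,a5,a6,a7] : Fin 8 → ℝ) 3 = a3 := rfl
@[simp] lemma vec8_4 (a0 a1 a2 a3 a4 a5 a6 a7 : ℝ) :
    (![a0,a1,a2,a3,a4,a5,a6,a7] : Fin 8 → ℝ) 4 = a4 := rfl
@[simp] lemma vec8_5 (a0 a1 a2 a3 a4 a5 a6 a7 : ℝ) :
    (![a0,a1,a2,a3,a4,a5,a6,a7] : Fin 8 → ℝ) 5 = a5 := rfl
@[simp] lemma vec8_6 (a0 a1 a2 a3 a4 a5 a6 a7 : ℝ) :
    (![a0,a1,a2,a3,a4,a5,a6,a7] : Fin 8 → ℝ) 6 = a6 := rfl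
@[simp] lemma vec8_7 (a0 a1 a2 a3 a4 a5 a6 a7 : ℝ) :
    (![a0,a1,a2,a3,a4,a5,a6,a7] : Fin 8 → ℝ) 7 = a7 := rfl

lemma hd8 (j : Fin 8) : Differentiable ℝ (fun y : Fin 8 → ℝ => y j) :=
  (ContinuousLinearMap.proj j : (Fin 8 → ℝ) →L[ℝ] ℝ).differentiable

lemma pd_proj (i j : Fin 8) (x : Fin 8 → ℝ) :
    pd8 i (fun y => y j) x = (Pi.single i 1 : Fin 8 → ℝ) j := by
  have : fderiv ℝ (fun y : Fin 8 → ℝ => y j) x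
      = (ContinuousLinearMap.proj j : (Fin 8 → ℝ) →L[ℝ] ℝ) :=
    (ContinuousLinearMap.proj j : (Fin 8 → ℝ) →L[ℝ] ℝ).fderiv
  simp [pd8, this]

lemma key_sub (Z : (Fin 8 → ℝ) → (Fin 8 → ℝ)) (x : Fin 8 → ℝ) :
    applyVF Z (fun y => y 1 - y 4) x = Z x 1 - Z x 4 := by
  have h : ∀ i : Fin 8, pd8 i (fun y : Fin 8 → ℝ => y 1 - y 4) x
      = (Pi.single i 1 : Fin 8 → ℝ) 1 - (Pi.single i 1 : Fin 8 → ℝ) 4 := by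
    intro i
    have := fderiv_fun_sub (𝕜 := ℝ) (f := fun y : Fin 8 → ℝ => y 1)
      (g := fun y : Fin 8 → ℝ => y 4) (x := x) ((hd8 1).differentiableAt) ((hd8 4).differentiableAt)
    simp only [pd8, this, ContinuousLinearMap.sub_apply]
    rw [show fderiv ℝ (fun y : Fin 8 → ℝ => y 1) x (Pi.single i 1) = pd8 i (fun y => y 1) x from rfl,
        show fderiv ℝ (fun y : Fin 8 → ℝ => y 4) x (Pi.single i 1) = pd8 i (fun y => y 4) x from rfl,
        pd_proj, pd_proj]
  simp only [applyVF, h, Pi.single_apply, mul_sub, mul_ite, mul_one, mul_zero,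
    Finset.sum_sub_distrib, Finset.sum_ite_eq, Finset.mem_univ, if_true]

lemma key_add (Z : (Fin 8 → ℝ) → (Fin 8 → ℝ)) (x : Fin 8 → ℝ) :
    applyVF Z (fun y => y 2 + y 7) x = Z x 2 + Z x 7 := by
  have h : ∀ i : Fin 8, pd8 i (fun y : Fin 8 → ℝ => y 2 + y 7) x
      = (Pi.single i 1 : Fin 8 → ℝ) 2 + (Pi.single i 1 : Fin 8 → ℝ) 7 := by
    intro i
    have := fderiv_fun_add (𝕜 := ℝ) (f := fun y : Fin 8 → ℝ => y 2)
      (g := fun y : Fin 8 → ℝ => y 7) (x := x) ((hd8 2).differentiableAt) ((hd8 7).differentiableAt)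
    simp only [pd8, this, ContinuousLinearMap.add_apply]
    rw [show fderiv ℝ (fun y : Fin 8 → ℝ => y 2) x (Pi.single i 1) = pd8 i (fun y => y 2) x from rfl,
        show fderiv ℝ (fun y : Fin 8 → ℝ => y 7) x (Pi.single i 1) = pd8 i (fun y => y 7) x from rfl,
        pd_proj, pd_proj]
  simp only [applyVF, h, Pi.single_apply, mul_add, mul_ite, mul_one, mul_zero,
    Finset.sum_add_distrib, Finset.sum_ite_eq, Finset.mem_univ, if_true]

lemma mkcase (Z : (Fin 8 → ℝ) → (Fin 8 → ℝ)) (a b c d : ℝ)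
    (H : ∀ x : Fin 8 → ℝ,
      applyVF Z (fun y => y 1 - y 4) x = a * (x 1 - x 4) + b * (x 2 + x 7) ∧
      applyVF Z (fun y => y 2 + y 7) x = c * (x 1 - x 4) + d * (x 2 + x 7)) :
    ∃ a b c d : ℝ,
      (∀ x : Fin 8 → ℝ,
        applyVF Z (fun y => y 1 - y 4) x = a * (x 1 - x 4) + b * (x 2 + x 7) ∧
        applyVF Z (fun y => y 2 + y 7) x = c * (x 1 - x 4) + d * (x 2 + x 7)) ∧
      (∀ x : Fin 8 → ℝ, x 1 - x 4 = 0 → x 2 + x 7 = 0 →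
        applyVF Z (fun y => y 1 - y 4) x = 0 ∧
        applyVF Z (fun y => y 2 + y 7) x = 0) :=
  ⟨a, b, c, d, H, fun x h1 h2 => by
    obtain ⟨e1, e2⟩ := H x
    rw [e1, e2, h1, h2]; constructor <;> ring⟩

/-- Coordinates on ℝ⁸: `(u₁,u₂,u₃,u₄,v₁,v₂,v₃,v₄)` indexed by `0,…,7`.  The 13 listed
infinitesimal generators of the 13-dimensional symmetry subgroup of SL(6) each send
`F₁ = u₂ − v₁` and `F₂ = u₃ + v₄` to ℝ-linear combinations of `F₁, F₂`; in particular
they are tangent to the sixfold `{F₁ = 0, F₂ = 0}` defined by the linear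
ultrahyperbolic system. -/
theorem statement19 :
    ∀ Z ∈ ([
      fun _ : Fin 8 → ℝ => (![1, 0, 0, 0, 0, 0, 0, 0] : Fin 8 → ℝ),        -- ∂u₁
      fun _ => ![0, 0, 0, 1, 0, 0, 0, 0],                                   -- ∂u₄
      fun _ => ![0, 0, 0, 0, 0, 1, 0, 0],                                   -- ∂v₂
      fun _ => ![0, 0, 0, 0, 0, 0, 1, 0],                                   -- ∂v₃
      fun _ => ![0, 1, 0, 0, 1, 0, 0, 0],                                   -- ∂u₂ + ∂v₁
      fun _ => ![0, 0, 1, 0, 0, 0, 0, -1],                                  -- ∂u₃ − ∂v₄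
      fun x => ![x 0, x 1, 0, 0, x 4, x 5, 0, 0],
      fun x => ![0, 0, x 2, x 3, 0, 0, x 6, x 7],
      fun x => ![0, 0, -(x 1), x 0, 0, 0, -(x 5), x 4],
      fun x => ![x 3, -(x 2), 0, 0, x 7, -(x 6), 0, 0],
      fun x => ![0, x 0, -(x 3), 0, x 0, x 4 + x 1, -(x 7) + x 2, x 3],
      fun x => ![x 1 + x 4, x 5, x 6, -(x 2) + x 7, x 5, 0, 0, -(x 6)],
      fun x => ![0, x 1, x 2, 0, x 4, x 5 + x 5, x 6 + x 6, x 7]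
      ] : List ((Fin 8 → ℝ) → (Fin 8 → ℝ))),
    ∃ a b c d : ℝ,
      (∀ x : Fin 8 → ℝ,
        applyVF Z (fun y => y 1 - y 4) x = a * (x 1 - x 4) + b * (x 2 + x 7) ∧
        applyVF Z (fun y => y 2 + y 7) x = c * (x 1 - x 4) + d * (x 2 + x 7)) ∧
      (∀ x : Fin 8 → ℝ, x 1 - x 4 = 0 → x 2 + x 7 = 0 →
        applyVF Z (fun y => y 1 - y 4) x = 0 ∧
        applyVF Z (fun y => y 2 + y 7) x = 0) := by
  intro Z hZ
  simp only [List.mem_cons, List.not_mem_nil, or_false] at hZ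
  rcases hZ with rfl|rfl|rfl|rfl|rfl|rfl|rfl|rfl|rfl|rfl|rfl|rfl|rfl
  case _ => apply mkcase _ 0 0 0 0; intro x; rw [key_sub, key_add]; constructor <;> (simp; try ring)
  case _ => apply mkcase _ 0 0 0 0; intro x; rw [key_sub, key_add]; constructor <;> (simp; try ring)
  case _ => apply mkcase _ 0 0 0 0; intro x; rw [key_sub, key_add]; constructor <;> (simp; try ring)
  case _ => apply mkcase _ 0 0 0 0; intro x; rw [key_sub, key_add]; constructor <;> (simp; try ring)
  case _ => apply mkcase _ 0 0 0 0; intro x; rw [key_sub, key_add]; constructor <;> (simp; try ring)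
  case _ => apply mkcase _ 0 0 0 0; intro x; rw [key_sub, key_add]; constructor <;> (simp; try ring)
  case _ => apply mkcase _ 1 0 0 0; intro x; rw [key_sub, key_add]; constructor <;> (simp; try ring)
  case _ => apply mkcase _ 0 0 0 1; intro x; rw [key_sub, key_add]; constructor <;> (simp; try ring)
  case _ => apply mkcase _ 0 0 (-1) 0; intro x; rw [key_sub, key_add]; constructor <;> (simp; try ring)
  case _ => apply mkcase _ 0 (-1) 0 0; intro x; rw [key_sub, key_add]; constructor <;> (simp; try ring)
  case _ => apply mkcase _ 0 0 0 0; intro x; rw [key_sub, key_add]; constructor <;> (simp; try ring)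
  case _ => apply mkcase _ 0 0 0 0; intro x; rw [key_sub, key_add]; constructor <;> (simp; try ring)
  case _ => apply mkcase _ 1 0 0 1; intro x; rw [key_sub, key_add]; constructor <;> (simp; try ring)
end
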